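/- Let U be a finite set of vectors in ℝ^n and let x ∈ U be decreasingly minimal in U (for every y ∈ U, the decreasing rearrangement x↓ is lexicographically less than or equal to y↓). Assume there is some y ∈ U with y↓ ≠ x↓, and let ε = min{y↓_i − x↓_i : y ∈ U, i ∈ [n], y↓_i > x↓_i}. Then x is a minimizer over U of the symmetric strictly convex function Φ(z) = ∑_{i=1}^n (2n)^{z_i/ε}; moreover, Φ(y) > Φ(x) for every y ∈ U with y↓ ≠ x↓. -/

import Mathlib

open Finset

/-- The decreasing rearrangement of a vector in `ℝ^n`. -/
noncomputable def dRe {n : ℕ} (x : Fin n → ℝ) : Fin n → ℝ :=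
  fun i => (x ∘ Tuple.sort x) i.rev

/-- Lexicographic order on vectors in `ℝ^n`. -/
def lexLE {n : ℕ} (a b : Fin n → ℝ) : Prop :=
  a = b ∨ ∃ k : Fin n, (∀ i, i < k → a i = b i) ∧ a k < b k

lemma dRe_antitone {n : ℕ} (z : Fin n → ℝ) : Antitone (dRe z) := by
  intro i j hij
  exact Tuple.monotone_sort z (Fin.rev_le_rev.mpr hij)

lemma sum_dRe {n : ℕ} (z : Fin n → ℝ) (f : ℝ → ℝ) :
    ∑ i, f (dRe z i) = ∑ i, f (z i) := by
  have h : ∑ i, f (dRe z i) = ∑ i, f (z ((Fin.revPerm.trans (Tuple.sort z)) i)) := rfl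
  rw [h, Equiv.sum_comp (Fin.revPerm.trans (Tuple.sort z)) (fun i => f (z i))]

set_option maxHeartbeats 1000000 in
/-- a decreasingly minimal element of a finite set `U` minimizes the
symmetric strictly convex function `Φ(z) = ∑ i, (2n)^(z_i/ε)` over `U`, strictly so
against vectors not value-equivalent to it. -/
theorem stmt_6 {n : ℕ} (hn : 0 < n)
    (U : Finset (Fin n → ℝ)) (x : Fin n → ℝ) (hxU : x ∈ U)
    (hdm : ∀ y ∈ U, lexLE (dRe x) (dRe y))
    (hne : ∃ y ∈ U, dRe y ≠ dRe x)
    (ε : ℝ)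
    (hub : ∀ y ∈ U, ∀ i : Fin n, dRe x i < dRe y i → ε ≤ dRe y i - dRe x i)
    (hmem : ∃ y ∈ U, ∃ i : Fin n, dRe x i < dRe y i ∧ ε = dRe y i - dRe x i) :
    (∀ y ∈ U, (∑ i, (2 * n : ℝ) ^ (x i / ε)) ≤ ∑ i, (2 * n : ℝ) ^ (y i / ε)) ∧
    (∀ y ∈ U, dRe y ≠ dRe x →
      (∑ i, (2 * n : ℝ) ^ (x i / ε)) < ∑ i, (2 * n : ℝ) ^ (y i / ε)) := by
  set B : ℝ := (2 * n : ℝ) with hBdef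
  have hn1 : (1:ℝ) ≤ (n:ℝ) := by exact_mod_cast hn
  have hB1 : 1 < B := by rw [hBdef]; nlinarith
  have hB0 : 0 < B := lt_trans one_pos hB1
  have hε : 0 < ε := by
    obtain ⟨y, hy, i, hlt, heq⟩ := hmem
    rw [heq]; linarith
  have hpos : ∀ t : ℝ, (0:ℝ) < B ^ t := fun t => Real.rpow_pos_of_pos hB0 t
  have key : ∀ y ∈ U, dRe y ≠ dRe x →
      (∑ i, B ^ (x i / ε)) < ∑ i, B ^ (y i / ε) := by
    intro y hy hney
    have hx' : (∑ i, B ^ (x i / ε)) = ∑ i, B ^ (dRe x i / ε) :=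
      (sum_dRe x (fun t => B ^ (t / ε))).symm
    have hy' : (∑ i, B ^ (y i / ε)) = ∑ i, B ^ (dRe y i / ε) :=
      (sum_dRe y (fun t => B ^ (t / ε))).symm
    rw [hx', hy']
    obtain heq | ⟨k, hpre, hk⟩ := hdm y hy
    · exact absurd heq.symm hney
    set a := dRe x with ha
    set b := dRe y with hb
    classical
    rw [← Finset.sum_filter_add_sum_filter_not univ (fun i => i < k)
        (fun i => B ^ (a i / ε)),
        ← Finset.sum_filter_add_sum_filter_not univ (fun i => i < k)
        (fun i => B ^ (b i / ε))]
    have heqpre : ∑ i ∈ univ.filter (fun i => i < k), B ^ (a i / ε)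
        = ∑ i ∈ univ.filter (fun i => i < k), B ^ (b i / ε) := by
      refine Finset.sum_congr rfl fun i hi => ?_
      rw [hpre i (by simpa using hi)]
    rw [heqpre]
    apply add_lt_add_right
    have hkmem : k ∈ univ.filter (fun i => ¬ i < k) := by simp
    have hcard : (univ.filter (fun i : Fin n => ¬ i < k)).card ≤ n := by
      simpa using Finset.card_filter_le (univ : Finset (Fin n)) (fun i => ¬ i < k)
    calc ∑ i ∈ univ.filter (fun i => ¬ i < k), B ^ (a i / ε)
        ≤ (univ.filter (fun i : Fin n => ¬ i < k)).card • (B ^ (a k / ε)) := by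
          apply Finset.sum_le_card_nsmul
          intro i hi
          have hki : k ≤ i := le_of_not_gt (by simpa using hi)
          exact Real.rpow_le_rpow_left_iff hB1 |>.mpr
            (div_le_div_of_nonneg_right (dRe_antitone x hki) hε.le)
      _ ≤ (n : ℝ) * B ^ (a k / ε) := by
          rw [nsmul_eq_mul]
          exact mul_le_mul_of_nonneg_right (by exact_mod_cast hcard) (hpos _).le
      _ < B * B ^ (a k / ε) := by
          apply mul_lt_mul_of_pos_right _ (hpos _)
          rw [hBdef]; nlinarith
      _ = B ^ (1 + a k / ε) := by rw [Real.rpow_add hB0, Real.rpow_one]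
      _ ≤ B ^ (b k / ε) := by
          apply Real.rpow_le_rpow_left_iff hB1 |>.mpr
          have h1 : 1 ≤ (b k - a k) / ε := (one_le_div hε).mpr (hub y hy k hk)
          have h2 : (b k - a k) / ε + a k / ε = b k / ε := by rw [← add_div, sub_add_cancel]
          linarith
      _ ≤ ∑ i ∈ univ.filter (fun i => ¬ i < k), B ^ (b i / ε) :=
          Finset.single_le_sum (f := fun i => B ^ (b i / ε)) (fun i _ => (hpos _).le) hkmem
  refine ⟨fun y hy => ?_, key⟩
  by_cases h : dRe y = dRe x
  · have hx' : (∑ i, B ^ (x i / ε)) = ∑ i, B ^ (dRe x i / ε) :=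
      (sum_dRe x (fun t => B ^ (t / ε))).symm
    have hy' : (∑ i, B ^ (y i / ε)) = ∑ i, B ^ (dRe y i / ε) :=
      (sum_dRe y (fun t => B ^ (t / ε))).symm
    rw [hx', hy', h]
  · exact (key y hy h).le
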